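/- For all positive integers n, m and c with c ≤ ⌈log₂ m⌉, the number of monotone nondecreasing functions f : Fin n → Fin m is at most (n+1)^(2^c − 1) · 2^(n·(⌈log₂ m⌉ − c)). (This is the information-theoretic content of the paper's Lemma 2: a sorted list of n integers from the universe [0, m−1] can be re-encoded so that cn of its n·⌈log₂ m⌉ bits become free, up to storing 2^c − 1 positions in [0, n]; the most significant c bits of all entries form a nondecreasing sequence determined by at most 2^c − 1 threshold positions, and the remaining ⌈log₂ m⌉ − c bits of each entry are arbitrary.) -/

import Mathlib

private lemma lowerset_mem_card {n : ℕ} (S : Finset (Fin n))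
    (hS : ∀ x ∈ S, ∀ y : Fin n, y ≤ x → y ∈ S) (i : Fin n) (hi : i ∈ S) :
    (i : ℕ) < S.card := by
  have hsub : Finset.Iic i ⊆ S := fun y hy => hS i hi y (Finset.mem_Iic.mp hy)
  have := Finset.card_le_card hsub
  rw [Fin.card_Iic] at this
  omega

private lemma lowerset_not_mem_card {n : ℕ} (S : Finset (Fin n))
    (hS : ∀ x ∈ S, ∀ y : Fin n, y ≤ x → y ∈ S) (i : Fin n) (hi : i ∉ S) :
    S.card ≤ (i : ℕ) := by
  have hsub : S ⊆ Finset.Iio i := by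
    intro x hx
    rw [Finset.mem_Iio]
    by_contra hge
    push_neg at hge
    exact hi (hS x hx i hge)
  have := Finset.card_le_card hsub
  rwa [Fin.card_Iio] at this

private lemma mono_count_le (n k : ℕ) :
    Nat.card {g : Fin n → Fin k // Monotone g} ≤ (n + 1) ^ (k - 1) := by
  set Φ : {g : Fin n → Fin k // Monotone g} → (Fin (k - 1) → Fin (n + 1)) := fun g j =>
    ⟨(Finset.univ.filter (fun i : Fin n => (g.1 i : ℕ) ≤ (j : ℕ))).card, by
      have := Finset.card_filter_le Finset.univ (fun i : Fin n => (g.1 i : ℕ) ≤ (j : ℕ))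
      simpa using Nat.lt_succ_of_le (by simpa using this)⟩ with hΦdef
  have key : ∀ (a b : {g : Fin n → Fin k // Monotone g}), Φ a = Φ b →
      ∀ i : Fin n, (a.1 i : ℕ) < (b.1 i : ℕ) → False := by
    intro a b hab i hlt
    have hjlt : (a.1 i : ℕ) < k - 1 := by
      have : (b.1 i : ℕ) < k := (b.1 i).2
      omega
    set j : Fin (k - 1) := ⟨(a.1 i : ℕ), hjlt⟩ with hj
    set Sa := Finset.univ.filter (fun i' : Fin n => (a.1 i' : ℕ) ≤ (j : ℕ)) with hSa
    set Sb := Finset.univ.filter (fun i' : Fin n => (b.1 i' : ℕ) ≤ (j : ℕ)) with hSb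
    have hla : ∀ x ∈ Sa, ∀ y : Fin n, y ≤ x → y ∈ Sa := by
      intro x hx y hy
      simp only [hSa, Finset.mem_filter, Finset.mem_univ, true_and] at hx ⊢
      exact le_trans (a.2 hy) hx
    have hlb : ∀ x ∈ Sb, ∀ y : Fin n, y ≤ x → y ∈ Sb := by
      intro x hx y hy
      simp only [hSb, Finset.mem_filter, Finset.mem_univ, true_and] at hx ⊢
      exact le_trans (b.2 hy) hx
    have h1 : i ∈ Sa := by simp [hSa, hj]
    have h2 : i ∉ Sb := by simp [hSb, hj]; omega
    have hca := lowerset_mem_card Sa hla i h1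
    have hcb := lowerset_not_mem_card Sb hlb i h2
    have : Sa.card = Sb.card := by
      have := congrFun hab j
      simpa [hΦdef, Fin.ext_iff, hSa, hSb] using this
    omega
  have hΦ : Function.Injective Φ := by
    intro g g' h
    ext i
    by_contra hne
    rcases Nat.lt_or_ge (g.1 i : ℕ) (g'.1 i : ℕ) with hlt | hge
    · exact key g g' h i hlt
    · have : (g'.1 i : ℕ) < (g.1 i : ℕ) :=
        lt_of_le_of_ne hge (fun he => hne he.symm)
      exact key g' g h.symm i this
  calc Nat.card {g : Fin n → Fin k // Monotone g}
      ≤ Nat.card (Fin (k - 1) → Fin (n + 1)) := Nat.card_le_card_of_injective Φ hΦ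
    _ = (n + 1) ^ (k - 1) := by simp [Nat.card_eq_fintype_card]

/-- Information-theoretic content of Lemma 2: the number of monotone nondecreasing
functions `f : Fin n → Fin m` is at most `(n+1)^(2^c - 1) * 2^(n * (⌈log₂ m⌉ - c))`
for any `c ≤ ⌈log₂ m⌉`. -/
theorem sorted_count_le_positions_mul_lowbits
    (n m c : ℕ) (hn : 0 < n) (hm : 0 < m) (hc : 0 < c)
    (hcm : c ≤ Nat.clog 2 m) :
    Nat.card {f : Fin n → Fin m // Monotone f} ≤
      (n + 1) ^ (2 ^ c - 1) * 2 ^ (n * (Nat.clog 2 m - c)) := by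
  set L := Nat.clog 2 m with hL
  set d := L - c with hd
  have hLcd : L = c + d := by omega
  have hmle : m ≤ 2 ^ c * 2 ^ d := by
    have := Nat.le_pow_clog (by norm_num : 1 < 2) m
    rw [← hL, hLcd, pow_add] at this
    exact this
  have hdpos : 0 < 2 ^ d := Nat.pow_pos (by norm_num)
  set Ψ : {f : Fin n → Fin m // Monotone f} →
      {g : Fin n → Fin (2 ^ c) // Monotone g} × (Fin n → Fin (2 ^ d)) := fun f =>
    (⟨fun i => ⟨(f.1 i : ℕ) / 2 ^ d, by
        have : (f.1 i : ℕ) < 2 ^ c * 2 ^ d := lt_of_lt_of_le (f.1 i).2 hmle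
        exact Nat.div_lt_of_lt_mul (by rw [mul_comm]; exact this)⟩,
      fun i i' hii' => by
        simpa [Fin.le_def] using Nat.div_le_div_right (c := 2 ^ d) (f.2 hii')⟩,
     fun i => ⟨(f.1 i : ℕ) % 2 ^ d, Nat.mod_lt _ hdpos⟩) with hΨdef
  have hΨ : Function.Injective Ψ := by
    intro f f' h
    ext i
    have h1 : (f.1 i : ℕ) / 2 ^ d = (f'.1 i : ℕ) / 2 ^ d := by
      have := congrFun (congrArg (fun p => (Subtype.val p.1)) h) i
      simpa [hΨdef, Fin.ext_iff] using this
    have h2 : (f.1 i : ℕ) % 2 ^ d = (f'.1 i : ℕ) % 2 ^ d := by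
      have := congrFun (congrArg Prod.snd h) i
      simpa [hΨdef, Fin.ext_iff] using this
    calc ((f.1 i : ℕ)) = 2 ^ d * ((f.1 i : ℕ) / 2 ^ d) + (f.1 i : ℕ) % 2 ^ d :=
          (Nat.div_add_mod _ _).symm
      _ = 2 ^ d * ((f'.1 i : ℕ) / 2 ^ d) + (f'.1 i : ℕ) % 2 ^ d := by rw [h1, h2]
      _ = (f'.1 i : ℕ) := Nat.div_add_mod _ _
  calc Nat.card {f : Fin n → Fin m // Monotone f}
      ≤ Nat.card ({g : Fin n → Fin (2 ^ c) // Monotone g} × (Fin n → Fin (2 ^ d))) :=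
        Nat.card_le_card_of_injective Ψ hΨ
    _ = Nat.card {g : Fin n → Fin (2 ^ c) // Monotone g} * (2 ^ d) ^ n := by
        simp [Nat.card_eq_fintype_card]
    _ ≤ (n + 1) ^ (2 ^ c - 1) * (2 ^ d) ^ n :=
        Nat.mul_le_mul_right _ (mono_count_le n (2 ^ c))
    _ = (n + 1) ^ (2 ^ c - 1) * 2 ^ (n * (L - c)) := by
        rw [← pow_mul, ← hd, mul_comm d n]
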